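/- Let ψ be a Lévy exponent whose Lévy measure ρ satisfies: there exist constants α ∈ (0,2) and c > 0 such that ∫_{{z : |vz| ≤ 1}} |vz|² ρ(dz) ≥ c|v|^{2−α} for every v ∈ ℝ with |v| ≥ 1. Then for every v ∈ ℝ with |v| ≥ 1, Re ψ(v) ≥ (2c/π²) |v|^{2−α}. -/

import Mathlib

open MeasureTheory Complex Filter Topology

/-- The Lévy exponent with drift `b`, Gaussian coefficient `σ` and Lévy measure `ρ`:
`ψ(θ) = i b θ + σ²θ²/2 − ∫ (e^{iθu} − 1 − iθu/(1+u²)) ρ(du)`. -/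
noncomputable def levyExponent (b σ : ℝ) (ρ : Measure ℝ) (θ : ℝ) : ℂ :=
  Complex.I * b * θ + σ ^ 2 * θ ^ 2 / 2
    - ∫ u : ℝ, (Complex.exp (Complex.I * θ * u) - 1 - Complex.I * θ * u / (1 + u ^ 2)) ∂ρ

/-- `ρ` is a Lévy measure: no mass at `0` and `∫ min(1,u²) ρ(du) < ∞`. -/
def IsLevyMeasure (ρ : Measure ℝ) : Prop :=
  ρ {0} = 0 ∧ ∫⁻ u : ℝ, ENNReal.ofReal (min 1 (u ^ 2)) ∂ρ < ⊤


lemma aux_exp_bound (x : ℝ) :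
    ‖Complex.exp (Complex.I * x) - 1 - Complex.I * x‖ ≤ 3 * x ^ 2 := by
  have habsI : ‖Complex.I * x‖ = |x| := by
    simp [map_mul]
  rcases le_or_gt (|x|) 1 with h | h
  · have h1 := Complex.norm_exp_sub_one_sub_id_le (x := Complex.I * x) (by rw [habsI]; exact h)
    rw [habsI, _root_.sq_abs] at h1
    nlinarith [sq_nonneg x]
  · have h1 : ‖Complex.exp (Complex.I * x)‖ = 1 := by
      rw [Complex.norm_exp]
      simp
    have h2 : ‖Complex.exp (Complex.I * x) - 1 - Complex.I * x‖
        ≤ ‖Complex.exp (Complex.I * x) - 1‖ + ‖Complex.I * x‖ :=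
      norm_sub_le _ _
    have h3 : ‖Complex.exp (Complex.I * x) - 1‖
        ≤ ‖Complex.exp (Complex.I * x)‖ + ‖(1:ℂ)‖ :=
      norm_sub_le _ _
    rw [habsI] at h2
    rw [h1, norm_one] at h3
    nlinarith [_root_.sq_abs x, abs_nonneg x]

lemma aux_norm_bound (θ u : ℝ) :
    ‖Complex.exp (Complex.I * θ * u) - 1 - Complex.I * θ * u / (1 + u ^ 2)‖ ≤
      (3 * θ ^ 2 + |θ| + 2) * min 1 (u ^ 2) := by
  have hden : (0:ℝ) < 1 + u ^ 2 := by positivity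
  have habsden : ‖1 + (u:ℂ) ^ 2‖ = 1 + u ^ 2 := by
    have heq : (1 + (u:ℂ) ^ 2) = ((1 + u ^ 2 : ℝ) : ℂ) := by push_cast; ring
    rw [heq, Complex.norm_real, Real.norm_eq_abs, _root_.abs_of_pos hden]
  rcases le_or_gt (u ^ 2) 1 with h | h
  · have hne : (1 + (u:ℂ) ^ 2) ≠ 0 := by
      intro hcon
      rw [hcon] at habsden
      simp at habsden
      nlinarith
    have key : Complex.exp (Complex.I * θ * u) - 1 - Complex.I * θ * u / (1 + u ^ 2)
        = (Complex.exp (Complex.I * (θ * u)) - 1 - Complex.I * (θ * u))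
          + Complex.I * (θ * u) * (u ^ 2 / (1 + u ^ 2)) := by
      field_simp
      ring
    rw [key]
    have h1 := aux_exp_bound (θ * u)
    have h2 : ‖Complex.I * (θ * u) * (u ^ 2 / (1 + u ^ 2))‖ ≤ |θ| * u ^ 2 := by
      have heq2 : ‖Complex.I * (θ * u) * (u ^ 2 / (1 + u ^ 2))‖
          = |θ| * |u| * (u ^ 2 / (1 + u ^ 2)) := by
        rw [norm_mul, norm_mul, norm_div, habsden]
        have : ‖(u:ℂ) ^ 2‖ = u ^ 2 := by
          rw [norm_pow, Complex.norm_real, Real.norm_eq_abs, _root_.sq_abs]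
        rw [this, Complex.norm_I, one_mul]
        have h5 : ‖(θ:ℂ) * u‖ = |θ| * |u| := by
          rw [norm_mul, Complex.norm_real, Complex.norm_real, Real.norm_eq_abs, Real.norm_eq_abs]
        rw [h5]
      rw [heq2]
      have h6 : |u| * (u ^ 2 / (1 + u ^ 2)) ≤ u ^ 2 := by
        have hq : |u| / (1 + u ^ 2) ≤ 1 := by
          rw [div_le_one hden]
          nlinarith [_root_.sq_abs u, abs_nonneg u, sq_nonneg (|u| - 1)]
        have hrw : |u| * (u ^ 2 / (1 + u ^ 2)) = u ^ 2 * (|u| / (1 + u ^ 2)) := by ring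
        rw [hrw]
        nlinarith [sq_nonneg u]
      calc |θ| * |u| * (u ^ 2 / (1 + u ^ 2)) = |θ| * (|u| * (u ^ 2 / (1 + u ^ 2))) := by ring
        _ ≤ |θ| * u ^ 2 := mul_le_mul_of_nonneg_left h6 (abs_nonneg θ)
    have h3 := norm_add_le (Complex.exp (Complex.I * (θ * u)) - 1 - Complex.I * (θ * u))
      (Complex.I * (θ * u) * (u ^ 2 / (1 + u ^ 2)))
    rw [min_eq_right h]
    push_cast at h3 h1 ⊢
    nlinarith [sq_nonneg u, sq_nonneg θ, abs_nonneg θ, sq_nonneg (θ * u), sq_nonneg (θ * u * u)]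
  · have h1 : ‖Complex.exp (Complex.I * θ * u)‖ = 1 := by
      rw [Complex.norm_exp]; simp
    have h2 : ‖Complex.I * θ * u / (1 + u ^ 2)‖ ≤ |θ| := by
      have heq : ‖Complex.I * θ * u / (1 + u ^ 2)‖
          = |θ| * |u| / (1 + u ^ 2) := by
        rw [norm_div, norm_mul, norm_mul, habsden, Complex.norm_I, one_mul,
          Complex.norm_real, Complex.norm_real, Real.norm_eq_abs, Real.norm_eq_abs]
      rw [heq, div_le_iff₀ hden]
      nlinarith [_root_.sq_abs u, abs_nonneg u, abs_nonneg θ, sq_nonneg (|u| - 1),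
        mul_nonneg (abs_nonneg θ) (sq_nonneg (|u| - 1))]
    have h3 : ‖Complex.exp (Complex.I * θ * u) - 1 - Complex.I * θ * u / (1 + u ^ 2)‖
        ≤ ‖Complex.exp (Complex.I * θ * u) - 1‖
          + ‖Complex.I * θ * u / (1 + u ^ 2)‖ := norm_sub_le _ _
    have h4 : ‖Complex.exp (Complex.I * θ * u) - 1‖
        ≤ ‖Complex.exp (Complex.I * θ * u)‖ + ‖(1:ℂ)‖ :=
      norm_sub_le _ _
    rw [h1, norm_one] at h4
    rw [min_eq_left h.le, mul_one]
    nlinarith [sq_nonneg θ, abs_nonneg θ]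

lemma aux_cos_lb {x : ℝ} (hx : |x| ≤ 1) : 2 / Real.pi ^ 2 * x ^ 2 ≤ 1 - Real.cos x := by
  have h := Real.cos_bound hx
  have hpi := Real.pi_gt_three
  have h4 : |x| ^ 4 ≤ x ^ 2 := by
    have h7 : |x| ^ 4 = (x ^ 2) ^ 2 := by
      rw [← _root_.sq_abs x]; ring
    rw [h7]
    have hx2 : x ^ 2 ≤ 1 := by nlinarith [_root_.sq_abs x, abs_nonneg x]
    nlinarith [sq_nonneg x, hx2]
  have h5 := abs_le.1 h
  have h6 : 2 / Real.pi ^ 2 ≤ 43 / 96 := by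
    rw [div_le_iff₀ (by positivity)]
    nlinarith
  nlinarith [sq_nonneg x, sq_nonneg Real.pi]

/-- If `∫_{|vz|≤1} |vz|² ρ(dz) ≥ c|v|^{2−α}` for all `|v| ≥ 1`, then
`Re ψ(v) ≥ (2c/π²)|v|^{2−α}` for all `|v| ≥ 1`. -/
theorem levyExponent_re_lower_bound (b σ : ℝ) (hσ : 0 ≤ σ) (ρ : Measure ℝ)
    (hρ : IsLevyMeasure ρ) (α c : ℝ) (hα : 0 < α) (hα2 : α < 2) (hc : 0 < c)
    (hlow : ∀ v : ℝ, 1 ≤ |v| →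
      ENNReal.ofReal (c * |v| ^ (2 - α)) ≤
        ∫⁻ z in {z : ℝ | |v * z| ≤ 1}, ENNReal.ofReal (|v * z| ^ 2) ∂ρ) :
    ∀ v : ℝ, 1 ≤ |v| →
      (2 * c / Real.pi ^ 2) * |v| ^ (2 - α) ≤ (levyExponent b σ ρ v).re := by
  intro v hv
  set f : ℝ → ℂ := fun u =>
    Complex.exp (Complex.I * v * u) - 1 - Complex.I * v * u / (1 + u ^ 2) with hf_def
  have hdne : ∀ u : ℝ, (1 + (u:ℂ) ^ 2) ≠ 0 := by
    intro u hcon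
    have h := congrArg Complex.re hcon
    simp only [Complex.add_re, Complex.one_re, ← Complex.ofReal_pow, Complex.ofReal_re,
      Complex.zero_re] at h
    nlinarith [sq_nonneg u]
  have hcont : Continuous f := by
    apply Continuous.sub
    · apply Continuous.sub
      · exact Complex.continuous_exp.comp (by continuity)
      · exact continuous_const
    · exact Continuous.div (by continuity) (by continuity) hdne
  -- integrability of min 1 u²
  have hmin_nonneg : ∀ u : ℝ, 0 ≤ min 1 (u ^ 2) := fun u => le_min zero_le_one (sq_nonneg u)
  have hmin_int : Integrable (fun u : ℝ => min 1 (u ^ 2)) ρ := by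
    refine ⟨(continuous_const.min (continuous_pow 2)).aestronglyMeasurable, ?_⟩
    rw [hasFiniteIntegral_iff_ofReal (ae_of_all _ hmin_nonneg)]
    exact hρ.2
  -- integrability of f
  have hf_int : Integrable f ρ := by
    apply Integrable.mono' (hmin_int.const_mul (3 * v ^ 2 + |v| + 2))
      hcont.aestronglyMeasurable
    filter_upwards with u
    rw [hf_def]
    simpa using aux_norm_bound v u
  -- real part of f
  have hfre : ∀ u : ℝ, (f u).re = Real.cos (v * u) - 1 := by
    intro u
    have h1 : Complex.I * (v:ℂ) * (u:ℂ) = ((v * u : ℝ) : ℂ) * Complex.I := by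
      push_cast; ring
    have h2 : (((v * u : ℝ) : ℂ) * Complex.I / (1 + (u:ℂ) ^ 2)).re = 0 := by
      have hden : (0:ℝ) < 1 + u ^ 2 := by positivity
      have h3 : ((v * u : ℝ) : ℂ) * Complex.I / (1 + (u:ℂ) ^ 2)
          = ((v * u / (1 + u ^ 2) : ℝ) : ℂ) * Complex.I := by
        rw [div_eq_iff (hdne u)]
        push_cast
        rw [div_mul_eq_mul_div, div_mul_cancel₀ _ (hdne u)]
      rw [h3, Complex.mul_re, Complex.I_re, Complex.I_im, Complex.ofReal_re, Complex.ofReal_im]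
      ring
    simp only [hf_def, Complex.sub_re, h1, h2, Complex.exp_ofReal_mul_I_re, Complex.one_re,
      sub_zero]
  -- integrability of 1 - cos(vu)
  have hg_int : Integrable (fun u : ℝ => 1 - Real.cos (v * u)) ρ := by
    refine (hf_int.re.neg).congr (ae_of_all _ fun u => ?_)
    simp [hfre u]
  have hg_nonneg : ∀ u : ℝ, 0 ≤ 1 - Real.cos (v * u) := fun u => by
    linarith [Real.cos_le_one (v * u)]
  -- integral = lintegral
  have hIeq : ∫ u, (1 - Real.cos (v * u)) ∂ρ
      = (∫⁻ u, ENNReal.ofReal (1 - Real.cos (v * u)) ∂ρ).toReal :=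
    integral_eq_lintegral_of_nonneg_ae (ae_of_all _ hg_nonneg) hg_int.aestronglyMeasurable
  have hfin : ∫⁻ u, ENNReal.ofReal (1 - Real.cos (v * u)) ∂ρ < ⊤ :=
    (lintegral_ofReal_le_lintegral_enorm _).trans_lt hg_int.2
  -- key lintegral lower bound
  have hπ : (0:ℝ) < Real.pi := Real.pi_pos
  have hmeas : Measurable fun u : ℝ => ENNReal.ofReal (1 - Real.cos (v * u)) := by
    apply Measurable.ennreal_ofReal
    exact (continuous_const.sub ((Real.continuous_cos).comp (by continuity))).measurable
  have key : ENNReal.ofReal (2 / Real.pi ^ 2 * (c * |v| ^ (2 - α)))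
      ≤ ∫⁻ u, ENNReal.ofReal (1 - Real.cos (v * u)) ∂ρ := by
    have step1 : ENNReal.ofReal (2 / Real.pi ^ 2 * (c * |v| ^ (2 - α)))
        ≤ ENNReal.ofReal (2 / Real.pi ^ 2) *
          ∫⁻ z in {z : ℝ | |v * z| ≤ 1}, ENNReal.ofReal (|v * z| ^ 2) ∂ρ := by
      rw [ENNReal.ofReal_mul (by positivity)]
      exact mul_le_mul_right (hlow v hv) _
    have step2 : ENNReal.ofReal (2 / Real.pi ^ 2) *
          ∫⁻ z in {z : ℝ | |v * z| ≤ 1}, ENNReal.ofReal (|v * z| ^ 2) ∂ρ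
        = ∫⁻ z in {z : ℝ | |v * z| ≤ 1},
            ENNReal.ofReal (2 / Real.pi ^ 2) * ENNReal.ofReal (|v * z| ^ 2) ∂ρ := by
      rw [lintegral_const_mul' _ _ (by simp)]
    have step3 : ∫⁻ z in {z : ℝ | |v * z| ≤ 1},
            ENNReal.ofReal (2 / Real.pi ^ 2) * ENNReal.ofReal (|v * z| ^ 2) ∂ρ
        ≤ ∫⁻ z in {z : ℝ | |v * z| ≤ 1}, ENNReal.ofReal (1 - Real.cos (v * z)) ∂ρ := by
      apply setLIntegral_mono hmeas
      intro z hz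
      rw [← ENNReal.ofReal_mul (by positivity)]
      apply ENNReal.ofReal_le_ofReal
      have := aux_cos_lb (x := v * z) hz
      calc 2 / Real.pi ^ 2 * |v * z| ^ 2 = 2 / Real.pi ^ 2 * (v * z) ^ 2 := by
            rw [_root_.sq_abs]
        _ ≤ 1 - Real.cos (v * z) := this
    calc ENNReal.ofReal (2 / Real.pi ^ 2 * (c * |v| ^ (2 - α)))
        ≤ _ := step1
      _ = _ := step2
      _ ≤ _ := step3
      _ ≤ ∫⁻ u, ENNReal.ofReal (1 - Real.cos (v * u)) ∂ρ := setLIntegral_le_lintegral _ _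
  have hmain : 2 / Real.pi ^ 2 * (c * |v| ^ (2 - α)) ≤ ∫ u, (1 - Real.cos (v * u)) ∂ρ := by
    rw [hIeq]
    exact (ENNReal.ofReal_le_iff_le_toReal hfin.ne).mp key
  -- assemble
  have hpsi : (levyExponent b σ ρ v).re = σ ^ 2 * v ^ 2 / 2 + ∫ u, (1 - Real.cos (v * u)) ∂ρ := by
    have hre_int : (∫ u, f u ∂ρ).re = ∫ u, (Real.cos (v * u) - 1) ∂ρ := by
      have h5 : (∫ u, f u ∂ρ).re = ∫ u, (f u).re ∂ρ := by
        have h6 := integral_re (𝕜 := ℂ) hf_int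
        simpa [RCLike.re_to_complex] using h6.symm
      rw [h5]
      exact integral_congr_ae (ae_of_all _ fun u => hfre u)
    have h0 : (Complex.I * (b:ℂ) * (v:ℂ)).re = 0 := by simp [Complex.mul_re]
    have hσre : (((σ:ℂ)) ^ 2 * (v:ℂ) ^ 2 / 2).re = σ ^ 2 * v ^ 2 / 2 := by
      have : ((σ:ℂ)) ^ 2 * (v:ℂ) ^ 2 / 2 = ((σ ^ 2 * v ^ 2 / 2 : ℝ) : ℂ) := by
        push_cast; ring
      rw [this, Complex.ofReal_re]
    rw [levyExponent, Complex.sub_re, Complex.add_re, h0, hσre, hre_int, zero_add]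
    rw [show (∫ u, (Real.cos (v * u) - 1) ∂ρ) = - ∫ u, (1 - Real.cos (v * u)) ∂ρ by
      rw [← integral_neg]; exact integral_congr_ae (ae_of_all _ fun u => by ring)]
    ring
  rw [hpsi]
  have : 2 * c / Real.pi ^ 2 * |v| ^ (2 - α) = 2 / Real.pi ^ 2 * (c * |v| ^ (2 - α)) := by ring
  rw [this]
  nlinarith [sq_nonneg (σ * v), hmain, sq_nonneg σ, sq_nonneg v, mul_pow σ v 2]
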